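/- Let p, k₂, q₂ be positive integers with gcd(k₂, p) = 1 and 2k₂ < p, and define f(n) = 1 if [n]_p ∈ {-k₂+1,...,0}, f(n) = -1 if [n]_p ∈ {1,...,k₂}, 0 otherwise. If there exist integers i₀, j₀ with f(q₂ i₀ + k₂ j₀) = -1, f(q₂ i₀ + k₂(j₀+1)) = 1, and f(q₂ i₀ + k₂(j₀+2)) = -1, then for every integer i there are no two adjacent zeros in the sequence s ↦ f(q₂ i + k₂ s), i.e., there is no integer s with f(q₂ i + k₂ s) = 0 and f(q₂ i + k₂ (s+1)) = 0. -/
import Mathlib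


/-- `redp p n` is `[n]_p`, the representative of `n` mod `p` in `(-p/2, p/2]`. -/
def redp (p n : ℤ) : ℤ := (n + (p - 1) / 2) % p - (p - 1) / 2

/-- The sign function `f` of formula (1). -/
def dAsign (p k₂ n : ℤ) : ℤ :=
  if -k₂ + 1 ≤ redp p n ∧ redp p n ≤ 0 then 1
  else if 1 ≤ redp p n ∧ redp p n ≤ k₂ then -1
  else 0

lemma redp_bounds (p n : ℤ) (hp : 0 < p) :
    -((p-1)/2) ≤ redp p n ∧ redp p n ≤ p - 1 - (p-1)/2 := by
  unfold redp
  have h1 := Int.emod_nonneg (n + (p-1)/2) (by omega : p ≠ 0)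
  have h2 := Int.emod_lt_of_pos (n + (p-1)/2) hp
  omega

lemma redp_step (p k n : ℤ) (hp : 0 < p) (hk : 0 ≤ k) (hkp : k < p) :
    redp p (n + k) = redp p n + k ∨ redp p (n + k) = redp p n + k - p := by
  unfold redp
  have key : (n + k + (p-1)/2) % p = ((n + (p-1)/2) % p + k) % p := by
    rw [Int.emod_add_emod]; ring_nf
  have h1 := Int.emod_nonneg (n + (p-1)/2) (by omega : p ≠ 0)
  have h2 := Int.emod_lt_of_pos (n + (p-1)/2) hp
  set a := (n + (p-1)/2) % p with ha
  rcases lt_or_ge (a + k) p with h | h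
  · left
    rw [key, Int.emod_eq_of_lt (by omega) h]
    ring
  · right
    have : (a + k) % p = (a + k - p) % p := by
      conv_lhs => rw [show a + k = a + k - p + 1 * p by ring]
      rw [Int.add_mul_emod_self_right]
    rw [key, this, Int.emod_eq_of_lt (by omega) (by omega)]
    ring

lemma dAsign_eq_neg_one (p k n : ℤ) (h : dAsign p k n = -1) :
    1 ≤ redp p n ∧ redp p n ≤ k := by
  unfold dAsign at h; split_ifs at h <;> omega

lemma dAsign_eq_one (p k n : ℤ) (h : dAsign p k n = 1) :
    -k + 1 ≤ redp p n ∧ redp p n ≤ 0 := by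
  unfold dAsign at h; split_ifs at h <;> omega

lemma dAsign_eq_zero (p k n : ℤ) (h : dAsign p k n = 0) :
    ¬ (-k + 1 ≤ redp p n ∧ redp p n ≤ k) := by
  unfold dAsign at h; split_ifs at h <;> omega

/-- Lemma 2.3: if the pattern `-1, 1, -1` occurs in some
step-`k₂` sequence, then no step-`k₂` sequence has two adjacent zeros. -/
theorem lemma_le (p k₂ q₂ : ℤ) (hp : 0 < p) (hk : 0 < k₂) (hq : 0 < q₂)
    (hcop : IsCoprime k₂ p) (hk2 : 2 * k₂ < p)
    (i₀ j₀ : ℤ)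
    (h0 : dAsign p k₂ (q₂ * i₀ + k₂ * j₀) = -1)
    (h1 : dAsign p k₂ (q₂ * i₀ + k₂ * (j₀ + 1)) = 1)
    (h2 : dAsign p k₂ (q₂ * i₀ + k₂ * (j₀ + 2)) = -1) :
    ∀ i s : ℤ, ¬ (dAsign p k₂ (q₂ * i + k₂ * s) = 0 ∧
      dAsign p k₂ (q₂ * i + k₂ * (s + 1)) = 0) := by
  -- First, derive `p ≤ 3 * k₂ - 1` from the pattern `-1, 1`.
  have e1 : q₂ * i₀ + k₂ * (j₀ + 1) = (q₂ * i₀ + k₂ * j₀) + k₂ := by ring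
  rw [e1] at h1
  have hneg := dAsign_eq_neg_one p k₂ _ h0
  have hpos := dAsign_eq_one p k₂ _ h1
  have hstep := redp_step p k₂ (q₂ * i₀ + k₂ * j₀) hp (le_of_lt hk) (by omega)
  have hp3 : p ≤ 3 * k₂ - 1 := by omega
  -- Now the adjacent-zeros part.
  intro i s ⟨hz0, hz1⟩
  have e2 : q₂ * i + k₂ * (s + 1) = (q₂ * i + k₂ * s) + k₂ := by ring
  rw [e2] at hz1
  have z0 := dAsign_eq_zero p k₂ _ hz0
  have z1 := dAsign_eq_zero p k₂ _ hz1
  have hb0 := redp_bounds p (q₂ * i + k₂ * s) hp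
  have hb1 := redp_bounds p ((q₂ * i + k₂ * s) + k₂) hp
  have hstep2 := redp_step p k₂ (q₂ * i + k₂ * s) hp (le_of_lt hk) (by omega)
  omega
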